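/- Let G be a finite graph with vertex weights in a commutative monoid S, edge weights γ, and linearly ordered edges. Then the V-polynomial admits the spanning tree expansion V(G) = Σ_{T∈T(G)} (∏_{e internally inactive w.r.t. T} γ_e) · (∏_{e externally active w.r.t. T} (γ_e + 1)) · V(T / II(G,T)), where T(G) is the set of maximal spanning forests of G, II(G,T) is the set of internally inactive edges of T, and T / II(G,T) is the vertex-weighted forest obtained from T by contracting all internally inactive edges (merged vertices receive the sum of the weights of the merged vertices). -/

import Mathlib

open scoped Classical
open Finset

structure VWGraph (V E : Type) where
  ends : E → Sym2 V

namespace VWGraph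

variable {V E S R : Type} [Fintype V] [Fintype E]

/-- Two vertices are joined by an edge of `A`. -/
def adjRel (G : VWGraph V E) (A : Finset E) (u v : V) : Prop :=
  ∃ e ∈ A, G.ends e = s(u, v)

/-- The setoid on vertices whose classes are the connected components of the
spanning subgraph `(V, A)`. -/
def compSetoid (G : VWGraph V E) (A : Finset E) : Setoid V :=
  ⟨Relation.EqvGen (G.adjRel A), Relation.EqvGen.is_equivalence _⟩

/-- The connected components of the spanning subgraph `(V, A)`. -/
def Comp (G : VWGraph V E) (A : Finset E) : Type := Quotient (G.compSetoid A)

noncomputable instance (G : VWGraph V E) (A : Finset E) : Fintype (G.Comp A) :=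
  @Quotient.fintype V _ (G.compSetoid A) (Classical.decRel _)

/-- `k(A)`: the number of connected components of the spanning subgraph `(V, A)`. -/
noncomputable def kA (G : VWGraph V E) (A : Finset E) : ℕ := Nat.card (G.Comp A)

/-- `u` and `v` are connected in the spanning subgraph `(V, A)`. -/
def Connects (G : VWGraph V E) (A : Finset E) (u v : V) : Prop :=
  Relation.EqvGen (G.adjRel A) u v

/-- The endpoints of `e` are connected in the spanning subgraph `(V, A)`. -/
def EndsConnected (G : VWGraph V E) (A : Finset E) (e : E) : Prop :=
  ∃ u v, G.ends e = s(u, v) ∧ G.Connects A u v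

def IsLoop (G : VWGraph V E) (e : E) : Prop := (G.ends e).IsDiag

/-- `(V, A)` is a forest (acyclic spanning subgraph): every edge of `A` is a bridge of it. -/
def IsForest (G : VWGraph V E) (A : Finset E) : Prop :=
  ∀ e ∈ A, ¬ G.EndsConnected (A.erase e) e

/-- All vertices are pairwise connected using edges of `A`. -/
def ConnectsAll (G : VWGraph V E) (A : Finset E) : Prop := ∀ u v, G.Connects A u v

/-- A maximal spanning forest: a forest restricting to a spanning tree of each
connected component of `G`. -/
def IsSpanningTree (G : VWGraph V E) (T : Finset E) : Prop :=
  G.IsForest T ∧ ∀ u v, G.Connects T u v ↔ G.Connects Finset.univ u v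

/-- `e ∈ T` is internally active: `e` is minimal in the cut
`{f : (T - e) ∪ {f} ∈ 𝒯(G)}`. -/
def IntActive [LinearOrder E] (G : VWGraph V E) (T : Finset E) (e : E) : Prop :=
  e ∈ T ∧ ∀ f, G.IsSpanningTree (insert f (T.erase e)) → e ≤ f

/-- The edge set of the unique cycle of `T ∪ {e}` (when it exists):
`e` together with those `f ∈ T` whose removal disconnects the ends of `e`. -/
noncomputable def cycleEdges (G : VWGraph V E) (T : Finset E) (e : E) : Finset E :=
  insert e (T.filter fun f => ¬ G.EndsConnected (T.erase f) e)

/-- `e ∉ T` is externally active: `T ∪ {e}` contains a cycle through `e` and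
`e` is the minimal edge of that cycle. -/
def ExtActive [LinearOrder E] (G : VWGraph V E) (T : Finset E) (e : E) : Prop :=
  e ∉ T ∧ G.EndsConnected T e ∧ ∀ f ∈ G.cycleEdges T e, e ≤ f

/-- The vertex set of the component `c` of `(V, A)`. -/
noncomputable def compVerts (G : VWGraph V E) (A : Finset E) (c : G.Comp A) : Finset V :=
  Finset.univ.filter fun v => (Quotient.mk (G.compSetoid A) v) = c

/-- The total vertex weight of the component `c` of `(V, A)`. -/
noncomputable def compWeight [AddCommMonoid S] (G : VWGraph V E) (A : Finset E)
    (ω : V → S) (c : G.Comp A) : S :=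
  ∑ v ∈ G.compVerts A c, ω v

/-- The V-polynomial, defined by its state sum. -/
noncomputable def Vpoly [AddCommMonoid S] [CommRing R] (G : VWGraph V E)
    (ω : V → S) (γ : E → R) : MvPolynomial S R :=
  ∑ A : Finset E, (∏ c : G.Comp A, MvPolynomial.X (G.compWeight A ω c)) *
    MvPolynomial.C (∏ e ∈ A, γ e)

/-- The multivariate Tutte polynomial `Z_T(G; q, γ)` as a polynomial in `q`. -/
noncomputable def ZT [CommRing R] (G : VWGraph V E) (γ : E → R) : Polynomial R :=
  ∑ A : Finset E, Polynomial.X ^ (G.kA A) * Polynomial.C (∏ e ∈ A, γ e)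

/-- Deletion of the edge `e`. -/
def del (G : VWGraph V E) (e : E) : VWGraph V {f : E // f ≠ e} := ⟨fun f => G.ends f.1⟩

/-- Contraction of the edge `e`: vertices are the components of `(V, {e})`. -/
noncomputable def contract (G : VWGraph V E) (e : E) : VWGraph (G.Comp {e}) {f : E // f ≠ e} :=
  ⟨fun f => (G.ends f.1).map (Quotient.mk (G.compSetoid {e}))⟩

/-- The forest `T` with the edges of `B` contracted: vertices are the components
of `(V, B)` and edges are `T \ B`. -/
noncomputable def contractIn (G : VWGraph V E) (T B : Finset E) :
    VWGraph (G.Comp B) ↥(T \ B : Finset E) :=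
  ⟨fun f => (G.ends f.1).map (Quotient.mk (G.compSetoid B))⟩

/-- The edges of `G` with both ends inside `P`. -/
noncomputable def edgesIn (G : VWGraph V E) (P : Finset V) : Finset E :=
  Finset.univ.filter fun e => ∀ v ∈ G.ends e, v ∈ P

/-- The subgraph of `G` induced by the vertex set `P`. -/
noncomputable def induce (G : VWGraph V E) (P : Finset V) : VWGraph ↥P ↥(G.edgesIn P) :=
  ⟨fun e => (G.ends e.1).pmap (fun v hv => (⟨v, hv⟩ : ↥P))
    (by have he := e.2; simp only [edgesIn, Finset.mem_filter] at he; exact he.2)⟩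

/-- The block `B` induces a connected subgraph of `G`. -/
def BlockConnected (G : VWGraph V E) (B : Finset V) : Prop :=
  ∀ u ∈ B, ∀ v ∈ B, Relation.EqvGen (G.adjRel (G.edgesIn B)) u v

/-- A connected partition of `V(G)`: every vertex lies in exactly one block,
blocks are nonempty, and each block induces a connected subgraph. -/
def IsConnectedPartition (G : VWGraph V E) (P : Finset (Finset V)) : Prop :=
  (∀ B ∈ P, B.Nonempty) ∧ (∀ v : V, ∃! B, B ∈ P ∧ v ∈ B) ∧ ∀ B ∈ P, G.BlockConnected B

/-- The partition `Π(A)` of `V(G)` into the components of `(V, A)`. -/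
noncomputable def partitionOf (G : VWGraph V E) (A : Finset E) : Finset (Finset V) :=
  Finset.univ.image fun c : G.Comp A => G.compVerts A c

/-- The internally inactive edges of the spanning tree `T`. -/
noncomputable def intInactives [LinearOrder E] (G : VWGraph V E) (T : Finset E) : Finset E :=
  T.filter fun e => ¬ G.IntActive T e

/-- The internally active edges of the spanning tree `T`. -/
noncomputable def intActives [LinearOrder E] (G : VWGraph V E) (T : Finset E) : Finset E :=
  T.filter fun e => G.IntActive T e

/-- The externally active edges w.r.t. the spanning tree / forest `T`. -/
noncomputable def extActives [LinearOrder E] (G : VWGraph V E) (T : Finset E) : Finset E :=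
  Finset.univ.filter fun e => G.ExtActive T e

/-- Kronecker delta `δ(σ_i, σ_j)` for the two ends of the edge `e`. -/
noncomputable def edgeDelta (G : VWGraph V E) {q : ℕ} (σ : V → Fin q) (e : E) : ℂ :=
  Sym2.lift ⟨fun u v => if σ u = σ v then 1 else 0, fun u v => by simp [eq_comm]⟩ (G.ends e)

/-- The Potts partition function with variable interactions `J` and
field vectors `M`. -/
noncomputable def Zext (G : VWGraph V E) (q : ℕ) (β : ℂ) (J : E → ℂ) (M : V → Fin q → ℂ) : ℂ :=
  ∑ σ : V → Fin q, Complex.exp (β * ((∑ e : E, J e * G.edgeDelta σ e) +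
    ∑ v : V, ∑ α : Fin q, M v α * (if α = σ v then 1 else 0)))

/-- The Potts partition function with constant interaction `J` and constant
field `H` favouring the first spin. -/
noncomputable def ZconstField (G : VWGraph V E) (q : ℕ) (β J H : ℂ) : ℂ :=
  ∑ σ : V → Fin q, Complex.exp (β * (J * (∑ e : E, G.edgeDelta σ e) +
    H * ∑ v : V, (if (σ v : ℕ) = 0 then (1 : ℂ) else 0)))

/-- The zero-field Potts partition function with constant interaction `J`. -/
noncomputable def Zzero (G : VWGraph V E) (q : ℕ) (β J : ℂ) : ℂ :=
  ∑ σ : V → Fin q, Complex.exp (β * J * ∑ e : E, G.edgeDelta σ e)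

end VWGraph

namespace VWGraph

set_option linter.unusedSectionVars false
set_option linter.unusedVariables false
variable {V E : Type} {G : VWGraph V E} {A B T : Finset E} {u v w p q : V}

lemma connects_refl (G : VWGraph V E) (A : Finset E) (u : V) : G.Connects A u u :=
  Relation.EqvGen.refl u

lemma Connects.symm (h : G.Connects A u v) : G.Connects A v u := Relation.EqvGen.symm _ _ h

lemma Connects.trans (h : G.Connects A u v) (h' : G.Connects A v w) : G.Connects A u w :=
  Relation.EqvGen.trans _ _ _ h h'

lemma connects_of_adj {e : E} (he : e ∈ A) (h : G.ends e = s(u, v)) : G.Connects A u v :=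
  Relation.EqvGen.rel _ _ ⟨e, he, h⟩

lemma Connects.mono (hAB : A ⊆ B) (h : G.Connects A u v) : G.Connects B u v :=
  Relation.EqvGen.mono (r := G.adjRel A) (p := G.adjRel B)
    (fun x y ⟨e, he, hx⟩ => ⟨e, hAB he, hx⟩) _ _ h

lemma EndsConnected.mono {e : E} (hAB : A ⊆ B) (h : G.EndsConnected A e) :
    G.EndsConnected B e := by
  obtain ⟨x, y, hxy, hc⟩ := h; exact ⟨x, y, hxy, hc.mono hAB⟩

/-- If every edge of `A` outside `B ⊆ A` has its ends connected in `B`, then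
connectivity w.r.t. `A` reduces to connectivity w.r.t. `B`. -/
lemma Connects.reduce (h : ∀ e ∈ A, e ∉ B → G.EndsConnected B e)
    (hc : G.Connects A u v) : G.Connects B u v := by
  induction hc with
  | rel x y hxy =>
    obtain ⟨e, heA, hends⟩ := hxy
    by_cases heB : e ∈ B
    · exact connects_of_adj heB hends
    · obtain ⟨a, b, hab, hcon⟩ := h e heA heB
      rw [hends, Sym2.eq_iff] at hab
      rcases hab with ⟨rfl, rfl⟩ | ⟨rfl, rfl⟩
      · exact hcon
      · exact hcon.symm
  | refl x => exact connects_refl G B x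
  | symm x y _ ih => exact ih.symm
  | trans x y z _ _ ih ih' => exact ih.trans ih'

/-- Splitting a connection in `insert e B` according to whether it uses `e`. -/
lemma connects_insert_elim {e : E} (hends : G.ends e = s(p, q)) {D : Finset E}
    (h : G.Connects D u v) (hD : ∀ x ∈ D, x = e ∨ x ∈ B) :
    G.Connects B u v ∨ (G.Connects B u p ∧ G.Connects B q v) ∨
      (G.Connects B u q ∧ G.Connects B p v) := by
  induction h with
  | rel x y hxy =>
    obtain ⟨f, hf, hfe⟩ := hxy
    rcases hD f hf with rfl | hfB
    · rw [hends] at hfe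
      rw [Sym2.eq_iff] at hfe
      rcases hfe with ⟨rfl, rfl⟩ | ⟨rfl, rfl⟩
      · exact Or.inr (Or.inl ⟨connects_refl G B p, connects_refl G B q⟩)
      · exact Or.inr (Or.inr ⟨connects_refl G B q, connects_refl G B p⟩)
    · exact Or.inl (connects_of_adj hfB hfe)
  | refl x => exact Or.inl (connects_refl G B x)
  | symm x y _ ih =>
    rcases ih with h | ⟨h1, h2⟩ | ⟨h1, h2⟩
    · exact Or.inl h.symm
    · exact Or.inr (Or.inr ⟨h2.symm, h1.symm⟩)
    · exact Or.inr (Or.inl ⟨h2.symm, h1.symm⟩)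
  | trans x y z _ _ ih ih' =>
    rcases ih with h1 | ⟨h1, h2⟩ | ⟨h1, h2⟩ <;>
      rcases ih' with h3 | ⟨h3, h4⟩ | ⟨h3, h4⟩
    · exact Or.inl (h1.trans h3)
    · exact Or.inr (Or.inl ⟨h1.trans h3, h4⟩)
    · exact Or.inr (Or.inr ⟨h1.trans h3, h4⟩)
    · exact Or.inr (Or.inl ⟨h1, h2.trans h3⟩)
    · exact Or.inr (Or.inl ⟨h1, h4⟩)
    · exact Or.inl (h1.trans h4)
    · exact Or.inr (Or.inr ⟨h1, h2.trans h3⟩)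
    · exact Or.inl (h1.trans h4)
    · exact Or.inr (Or.inr ⟨h1, h4⟩)

lemma classicalDecEq_eq [LinearOrder E] : (fun (a b : E) => Classical.propDecidable (a = b)) =
    (fun a b => LinearOrder.toDecidableEq a b) := by
  funext a b; exact Subsingleton.elim _ _

lemma isForest_iff [LinearOrder E] : G.IsForest A ↔ ∀ e ∈ A, ¬ G.EndsConnected (A.erase e) e := by
  unfold IsForest
  rw [classicalDecEq_eq]

lemma isSpanningTree_iff [Fintype E] [LinearOrder E] : G.IsSpanningTree T ↔
    ((∀ e ∈ T, ¬ G.EndsConnected (T.erase e) e) ∧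
      ∀ u v, G.Connects T u v ↔ G.Connects Finset.univ u v) := by
  unfold IsSpanningTree
  rw [isForest_iff]

lemma mem_cycleEdges [LinearOrder E] {T : Finset E} {e f : E} :
    f ∈ G.cycleEdges T e ↔ f = e ∨ (f ∈ T ∧ ¬ G.EndsConnected (T.erase f) e) := by
  unfold cycleEdges
  rw [classicalDecEq_eq]
  simp only [Finset.mem_insert, Finset.mem_filter]

end VWGraph
namespace VWGraph
set_option linter.unusedSectionVars false
set_option linter.unusedVariables false
set_option linter.unusedSectionVars false
set_option linter.unusedVariables false

variable {V E : Type} [Fintype V] [Fintype E] [LinearOrder E] {G : VWGraph V E} {A B T : Finset E} {u v w p q : V}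

lemma sym2_exists (z : Sym2 V) : ∃ a b : V, z = s(a, b) :=
  Sym2.ind (fun a b => ⟨a, b, rfl⟩) z

lemma endsConnected_iff {e : E} (hends : G.ends e = s(u, v)) :
    G.EndsConnected A e ↔ G.Connects A u v := by
  constructor
  · rintro ⟨a, b, hab, hc⟩
    rw [hends, Sym2.eq_iff] at hab
    rcases hab with ⟨rfl, rfl⟩ | ⟨rfl, rfl⟩
    · exact hc
    · exact hc.symm
  · intro h; exact ⟨u, v, hends, h⟩

/-- A connection in `B` between vertices not connected in `R` yields an edge of `B`
whose ends are not connected in `R`. -/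
lemma exists_crossing {R : Finset E} (h : G.Connects B u v) (hR : ¬ G.Connects R u v) :
    ∃ f ∈ B, ¬ G.EndsConnected R f := by
  by_contra hc
  push_neg at hc
  exact hR (h.reduce fun e he _ => hc e he)

/-- The path between `u` and `v` in a forest only uses edges whose removal
disconnects `u` and `v`. -/
lemma connects_filter_bridges (hF : ∀ e ∈ T, ¬ G.EndsConnected (T.erase e) e) (h : G.Connects T u v) :
    G.Connects (T.filter fun f => ¬ G.Connects (T.erase f) u v) u v := by
  set C := T.filter fun f => ¬ G.Connects (T.erase f) u v with hC
  -- strong induction on subsets D of T connecting u and v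
  suffices H : ∀ n (D : Finset E), D.card ≤ n → D ⊆ T → G.Connects D u v →
      G.Connects C u v by
    exact H T.card T le_rfl (le_refl T) h
  intro n
  induction n with
  | zero =>
    intro D hcard hDT hconn
    have : D = ∅ := Finset.card_eq_zero.mp (Nat.le_zero.mp hcard)
    subst this
    exact hconn.mono (Finset.empty_subset C)
  | succ n ih =>
    intro D hcard hDT hconn
    by_cases hsub : D ⊆ C
    · exact hconn.mono hsub
    · obtain ⟨g, hgD, hgC⟩ := Finset.not_subset.mp hsub
      have hgT : g ∈ T := hDT hgD
      have hg : G.Connects (T.erase g) u v := by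
        by_contra hng
        exact hgC (Finset.mem_filter.mpr ⟨hgT, hng⟩)
      obtain ⟨a, b, hab⟩ := sym2_exists (G.ends g)
      have hins : D = insert g (D.erase g) := (Finset.insert_erase hgD).symm
      have hDg : G.Connects (D.erase g) u v := by
        have := connects_insert_elim hab (hins ▸ hconn) (fun x hx => Finset.mem_insert.mp hx)
        rcases this with h1 | ⟨h1, h2⟩ | ⟨h1, h2⟩
        · exact h1
        · -- u ~ a, b ~ v in D.erase g ⊆ T.erase g; with u ~ v in T.erase g get a ~ b
          exfalso
          have hsub' : D.erase g ⊆ T.erase g :=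
            fun x hx => Finset.mem_erase.mpr
              ⟨(Finset.mem_erase.mp hx).1, hDT (Finset.mem_erase.mp hx).2⟩
          have : G.Connects (T.erase g) a b :=
            ((h1.mono hsub').symm.trans hg).trans (h2.mono hsub').symm
          exact hF g hgT ⟨a, b, hab, this⟩
        · exfalso
          have hsub' : D.erase g ⊆ T.erase g :=
            fun x hx => Finset.mem_erase.mpr
              ⟨(Finset.mem_erase.mp hx).1, hDT (Finset.mem_erase.mp hx).2⟩
          have : G.Connects (T.erase g) a b :=
            ((h2.mono hsub').trans hg.symm).trans (h1.mono hsub')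
          exact hF g hgT ⟨a, b, hab, this⟩
      have hcard' : (D.erase g).card ≤ n := by
        have := Finset.card_erase_of_mem hgD
        omega
      exact ih (D.erase g) hcard' ((Finset.erase_subset g D).trans hDT) hDg

/-- Exchange: replacing `f ∈ T` by an edge `e ∉ T` whose ends are connected in `T`
but not in `T - f` yields another spanning tree. -/
lemma spanningTree_exchange (hT : G.IsSpanningTree T) {e f : E} (heT : e ∉ T)
    (hfT : f ∈ T) (hne : ¬ G.EndsConnected (T.erase f) e) (hce : G.EndsConnected T e) :
    G.IsSpanningTree (insert e (T.erase f)) := by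
  rw [isSpanningTree_iff] at hT ⊢
  have hT1 := hT.1
  have hT2 := hT.2
  obtain ⟨u, v, hu, hconnT⟩ := hce
  set R := T.erase f with hR
  have hnR : ¬ G.Connects R u v := fun hh => hne ((endsConnected_iff hu).mpr hh)
  obtain ⟨a, b, hab⟩ := sym2_exists (G.ends f)
  have hTins : T = insert f R := (Finset.insert_erase hfT).symm
  have heR : e ∉ R := fun hh => heT (Finset.erase_subset f T hh)
  -- orient f so that u ~ a and b ~ v in R
  have key : ∃ a' b', G.ends f = s(a', b') ∧ G.Connects R u a' ∧ G.Connects R b' v := by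
    have := connects_insert_elim hab (hTins ▸ hconnT) (fun x hx => Finset.mem_insert.mp hx)
    rcases this with h1 | ⟨h1, h2⟩ | ⟨h1, h2⟩
    · exact absurd h1 hnR
    · exact ⟨a, b, hab, h1, h2⟩
    · exact ⟨b, a, hab.trans (Sym2.eq_swap), h1, h2⟩
  obtain ⟨a, b, hab, hua, hbv⟩ := key
  set S := insert e R with hS
  have hRS : R ⊆ S := Finset.subset_insert e R
  have heS : e ∈ S := Finset.mem_insert_self e R
  have huv_S : G.Connects S u v := connects_of_adj heS hu
  constructor
  · -- forest
    intro g hg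
    rcases Finset.mem_insert.mp hg with rfl | hgR
    · rw [Finset.erase_insert heR]
      exact fun hh => hnR ((endsConnected_iff hu).mp hh)
    · rintro ⟨c, d, hcd, hconn⟩
      have hgT : g ∈ T := Finset.erase_subset f T hgR
      have hge : g ≠ e := fun hh => heR (hh ▸ hgR)
      have hSg : S.erase g = insert e (R.erase g) := Finset.erase_insert_of_ne hge.symm
      rw [hSg] at hconn
      have hRgT : R.erase g ⊆ T.erase g := fun x hx => by
        have h1 := Finset.mem_erase.mp hx
        exact Finset.mem_erase.mpr ⟨h1.1, Finset.erase_subset f T h1.2⟩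
      rcases connects_insert_elim hu hconn (fun x hx => Finset.mem_insert.mp hx) with h1 | ⟨h1, h2⟩ | ⟨h1, h2⟩
      · exact hT1 g hgT ⟨c, d, hcd, h1.mono hRgT⟩
      · -- c ~ u, v ~ d in R.erase g : then u ~ v in R, contradiction
        refine hnR ?_
        have hcd' : G.Connects R c d := connects_of_adj hgR hcd
        exact ((h1.mono (Finset.erase_subset g R)).symm.trans hcd').trans
          (h2.mono (Finset.erase_subset g R)).symm
      · refine hnR ?_
        have hcd' : G.Connects R c d := connects_of_adj hgR hcd
        exact (h2.mono (Finset.erase_subset g R)).trans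
          (hcd'.symm.trans (h1.mono (Finset.erase_subset g R)))
  · -- spanning
    intro c d
    constructor
    · intro h; exact h.mono (Finset.subset_univ S)
    · intro h
      have hTcd : G.Connects T c d := (hT2 c d).mpr h
      rcases connects_insert_elim hab (hTins ▸ hTcd) (fun x hx => Finset.mem_insert.mp hx) with h1 | ⟨h1, h2⟩ | ⟨h1, h2⟩
      · exact h1.mono hRS
      · exact ((h1.mono hRS).trans ((hua.mono hRS).symm.trans
          (huv_S.trans (hbv.mono hRS).symm))).trans (h2.mono hRS)
      · exact ((h1.mono hRS).trans ((hbv.mono hRS).trans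
          (huv_S.symm.trans (hua.mono hRS)))).trans (h2.mono hRS)

end VWGraph
namespace VWGraph
set_option linter.unusedSectionVars false
set_option linter.unusedVariables false

set_option linter.unusedSectionVars false
set_option linter.unusedVariables false

variable {V E : Type} [Fintype V] [Fintype E] [LinearOrder E] {G : VWGraph V E}
  {A B T : Finset E} {u v w p q : V}

/-- The processing order used by the greedy algorithm: edges of `A` first in
decreasing order, then edges outside `A` in increasing order. -/
def pk (A : Finset E) (f e : E) : Prop :=
  (f ∈ A ∧ e ∉ A) ∨ (f ∈ A ∧ e ∈ A ∧ e < f) ∨ (f ∉ A ∧ e ∉ A ∧ f < e)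

lemma pk_irrefl (A : Finset E) (e : E) : ¬ pk A e e := by
  rintro (⟨h1, h2⟩ | ⟨h1, h2, h3⟩ | ⟨h1, h2, h3⟩) <;> first | exact h2 h1 | exact lt_irrefl _ h3

lemma pk_trans {A : Finset E} {e f g : E} (h1 : pk A f e) (h2 : pk A e g) : pk A f g := by
  rcases h1 with ⟨h1a, h1b⟩ | ⟨h1a, h1b, h1c⟩ | ⟨h1a, h1b, h1c⟩ <;>
    rcases h2 with ⟨h2a, h2b⟩ | ⟨h2a, h2b, h2c⟩ | ⟨h2a, h2b, h2c⟩ <;>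
      first
        | tauto
        | exact Or.inr (Or.inl ⟨h1a, h2b, lt_trans h2c h1c⟩)
        | exact Or.inr (Or.inr ⟨h1a, h2b, lt_trans h1c h2c⟩)

lemma pk_total {A : Finset E} {e f : E} (hne : f ≠ e) : pk A f e ∨ pk A e f := by
  by_cases hf : f ∈ A <;> by_cases he : e ∈ A
  · rcases hne.lt_or_gt with h | h
    · exact Or.inr (Or.inr (Or.inl ⟨he, hf, h⟩))
    · exact Or.inl (Or.inr (Or.inl ⟨hf, he, h⟩))
  · exact Or.inl (Or.inl ⟨hf, he⟩)
  · exact Or.inr (Or.inl ⟨he, hf⟩)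
  · rcases hne.lt_or_gt with h | h
    · exact Or.inl (Or.inr (Or.inr ⟨hf, he, h⟩))
    · exact Or.inr (Or.inr (Or.inr ⟨he, hf, h⟩))

/-- The set of edges processed strictly before `e`. -/
noncomputable def predE (A : Finset E) (e : E) : Finset E := Finset.univ.filter fun f => pk A f e

/-- The first `k` edges in processing order. -/
noncomputable def prefixSet (A : Finset E) (k : ℕ) : Finset E :=
  Finset.univ.filter fun f => (predE A f).card < k

lemma rank_lt_rank {A : Finset E} {f e : E} (h : pk A f e) :
    (predE A f).card < (predE A e).card := by
  apply Finset.card_lt_card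
  constructor
  · intro x hx
    exact Finset.mem_filter.mpr ⟨Finset.mem_univ x, pk_trans (Finset.mem_filter.mp hx).2 h⟩
  · intro hsub
    exact pk_irrefl A f (Finset.mem_filter.mp (hsub (Finset.mem_filter.mpr
      ⟨Finset.mem_univ f, h⟩))).2

lemma pk_iff_rank_lt {A : Finset E} {f e : E} :
    pk A f e ↔ (predE A f).card < (predE A e).card := by
  constructor
  · exact rank_lt_rank
  · intro h
    by_cases hne : f = e
    · subst hne; exact absurd h (lt_irrefl _)
    · rcases pk_total (A := A) hne with h1 | h1
      · exact h1
      · exact absurd (rank_lt_rank h1) (by omega)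

lemma rank_injective {A : Finset E} {f e : E}
    (h : (predE A f).card = (predE A e).card) : f = e := by
  by_contra hne
  rcases pk_total (A := A) hne with h1 | h1 <;> exact absurd (rank_lt_rank h1) (by omega)

lemma pred_eq_prefix (A : Finset E) (e : E) :
    predE A e = prefixSet A (predE A e).card := by
  ext f
  simp only [predE, prefixSet, Finset.mem_filter, Finset.mem_univ, true_and]
  refine (pk_iff_rank_lt (A := A)).trans ?_
  convert (Finset.mem_filter (s := (Finset.univ : Finset E))
    (p := fun f' => (predE A f').card < (predE A e).card) (a := f)).symm using 1
  simp
  exact iff_of_eq (by unfold predE; congr)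

lemma prefix_top (A : Finset E) : prefixSet A (Fintype.card E) = Finset.univ := by
  ext f
  simp only [prefixSet, Finset.mem_filter, Finset.mem_univ, true_and, iff_true]
  rw [← Finset.card_univ]
  apply Finset.card_lt_card
  exact ⟨Finset.subset_univ _,
    fun hsub => pk_irrefl A f (Finset.mem_filter.mp (hsub (Finset.mem_univ f))).2⟩

lemma prefix_succ (A : Finset E) (k : ℕ) :
    prefixSet A (k + 1) = prefixSet A k ∨
      ∃ e, (predE A e).card = k ∧ e ∉ prefixSet A k ∧
        prefixSet A (k + 1) = insert e (prefixSet A k) := by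
  by_cases h : ∃ e, (predE A e).card = k
  · obtain ⟨e, he⟩ := h
    refine Or.inr ⟨e, he, by simp [prefixSet, he], ?_⟩
    ext f
    simp only [prefixSet, Finset.mem_filter, Finset.mem_univ, true_and, Finset.mem_insert]
    constructor
    · intro hf
      rcases Nat.lt_succ_iff_lt_or_eq.mp hf with h1 | h1
      · exact Or.inr h1
      · exact Or.inl (rank_injective (h1.trans he.symm))
    · rintro (rfl | hf)
      · omega
      · omega
  · push_neg at h
    left
    ext f
    simp only [prefixSet, Finset.mem_filter, Finset.mem_univ, true_and]
    have := h f
    omega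

/-- The canonical spanning tree associated with the edge subset `A`:
the result of the greedy algorithm processing edges in the order `pk A`. -/
noncomputable def canon (G : VWGraph V E) (A : Finset E) : Finset E :=
  Finset.univ.filter fun e => ¬ G.EndsConnected (predE A e) e

lemma mem_canon {e : E} : e ∈ canon G A ↔ ¬ G.EndsConnected (predE A e) e := by
  simp [canon]

lemma greedy_main (G : VWGraph V E) (A : Finset E) (k : ℕ) :
    (∀ u v, G.Connects (prefixSet A k) u v →
      G.Connects (canon G A ∩ prefixSet A k) u v) ∧
    (∀ e ∈ canon G A ∩ prefixSet A k,
      ¬ G.EndsConnected ((canon G A ∩ prefixSet A k).erase e) e) := by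
  induction k with
  | zero =>
    have h0 : prefixSet A 0 = ∅ := by simp [prefixSet]
    rw [h0, Finset.inter_empty]
    exact ⟨fun u v h => h, by simp⟩
  | succ k IH =>
    rcases prefix_succ A k with heq | ⟨e, hrank, hek, heq⟩
    · rw [heq]; exact IH
    · have hpred : predE A e = prefixSet A k := by
        rw [pred_eq_prefix A e, hrank]
      by_cases heT : e ∈ canon G A
      · have hTins : canon G A ∩ prefixSet A (k + 1) =
            insert e (canon G A ∩ prefixSet A k) := by
          rw [heq, Finset.inter_insert_of_mem heT]
        obtain ⟨a, b, hab⟩ := sym2_exists (G.ends e)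
        have hsub : canon G A ∩ prefixSet A k ⊆ insert e (canon G A ∩ prefixSet A k) :=
          Finset.subset_insert _ _
        have hadj : G.Connects (insert e (canon G A ∩ prefixSet A k)) a b :=
          connects_of_adj (Finset.mem_insert_self e _) hab
        constructor
        · intro u v h
          rw [heq] at h; rw [hTins]
          rcases connects_insert_elim hab h (fun x hx => Finset.mem_insert.mp hx) with h1 | ⟨h1, h2⟩ | ⟨h1, h2⟩
          · exact (IH.1 u v h1).mono hsub
          · exact (((IH.1 u a h1).mono hsub).trans hadj).trans ((IH.1 b v h2).mono hsub)
          · exact (((IH.1 u b h1).mono hsub).trans hadj.symm).trans ((IH.1 a v h2).mono hsub)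
        · intro f hf
          rw [hTins] at hf ⊢
          have henot : e ∉ canon G A ∩ prefixSet A k :=
            fun hh => hek (Finset.mem_inter.mp hh).2
          rcases Finset.mem_insert.mp hf with rfl | hfk
          · rw [Finset.erase_insert henot]
            intro hEC
            exact mem_canon.mp heT (hpred ▸ hEC.mono Finset.inter_subset_right)
          · rintro ⟨c, d, hcd, hconn⟩
            have hfe : f ≠ e := fun hh => henot (hh ▸ hfk)
            rw [Finset.erase_insert_of_ne (Ne.symm hfe)] at hconn
            have hmemf : f ∈ canon G A ∩ prefixSet A k := hfk
            rcases connects_insert_elim hab hconn (fun x hx => Finset.mem_insert.mp hx) with h1 | ⟨h1, h2⟩ | ⟨h1, h2⟩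
            · exact IH.2 f hfk ⟨c, d, hcd, h1⟩
            · -- a ~ c ~ d ~ b inside canon ∩ prefix, so ends of e connected in prefix
              have hcd' : G.Connects (canon G A ∩ prefixSet A k) c d :=
                connects_of_adj hmemf hcd
              have hsub' := Finset.erase_subset f (canon G A ∩ prefixSet A k)
              have hchain : G.Connects (canon G A ∩ prefixSet A k) a b :=
                ((h1.mono hsub').symm.trans hcd').trans (h2.mono hsub').symm
              exact mem_canon.mp heT
                (hpred ▸ ⟨a, b, hab, hchain.mono Finset.inter_subset_right⟩)
            · have hcd' : G.Connects (canon G A ∩ prefixSet A k) c d :=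
                connects_of_adj hmemf hcd
              have hsub' := Finset.erase_subset f (canon G A ∩ prefixSet A k)
              have hchain : G.Connects (canon G A ∩ prefixSet A k) a b :=
                ((h2.mono hsub').trans (hcd'.symm.trans (h1.mono hsub'))).symm.symm
              exact mem_canon.mp heT
                (hpred ▸ ⟨a, b, hab, hchain.mono Finset.inter_subset_right⟩)
      · have hTeq : canon G A ∩ prefixSet A (k + 1) = canon G A ∩ prefixSet A k := by
          rw [heq, Finset.inter_insert_of_notMem heT]
        have hEC : G.EndsConnected (prefixSet A k) e := by
          rw [← hpred]
          by_contra hne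
          exact heT (mem_canon.mpr hne)
        constructor
        · intro u v h
          rw [heq] at h; rw [hTeq]
          refine IH.1 u v (h.reduce fun g hg hgk => ?_)
          rcases Finset.mem_insert.mp hg with rfl | h2
          · exact hEC
          · exact absurd h2 hgk
        · rw [hTeq]; exact IH.2

lemma canon_isSpanningTree (G : VWGraph V E) (A : Finset E) :
    G.IsSpanningTree (canon G A) := by
  have hm := greedy_main G A (Fintype.card E)
  rw [prefix_top, Finset.inter_univ] at hm
  rw [isSpanningTree_iff]
  exact ⟨hm.2, fun u v => ⟨fun h => h.mono (Finset.subset_univ _), hm.1 u v⟩⟩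

lemma canon_pred_conn (G : VWGraph V E) (A : Finset E) (f : E) {u v : V}
    (h : G.Connects (predE A f) u v) : G.Connects (canon G A ∩ predE A f) u v := by
  rw [pred_eq_prefix A f] at h ⊢
  exact (greedy_main G A (predE A f).card).1 u v h

/-- Edges of the canonical tree outside `A` are internally active. -/
lemma canon_int_active {e : E} (heT : e ∈ canon G A) (heA : e ∉ A) :
    G.IntActive (canon G A) e := by
  refine ⟨heT, fun f hf => ?_⟩
  by_cases hfe : f = e
  · exact le_of_eq hfe.symm
  obtain ⟨u, v, hu⟩ := sym2_exists (G.ends e)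
  have hforest := (isSpanningTree_iff.mp (canon_isSpanningTree G A)).1
  have hne : ¬ G.Connects ((canon G A).erase e) u v :=
    fun hh => hforest e heT ⟨u, v, hu, hh⟩
  have huniv : G.Connects (insert f ((canon G A).erase e)) u v :=
    ((isSpanningTree_iff.mp hf).2 u v).mpr (connects_of_adj (Finset.mem_univ e) hu)
  by_cases hfT : f ∈ canon G A
  · exfalso
    have : insert f ((canon G A).erase e) = (canon G A).erase e :=
      Finset.insert_eq_self.mpr (Finset.mem_erase.mpr ⟨hfe, hfT⟩)
    rw [this] at huniv
    exact hne huniv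
  · -- f was rejected by the greedy algorithm
    have hECf : G.EndsConnected (predE A f) f := by
      by_contra hc; exact hfT (mem_canon.mpr hc)
    obtain ⟨p, q, hp, hconnp⟩ := hECf
    have hconn' : G.Connects (canon G A ∩ predE A f) p q := canon_pred_conn G A f hconnp
    by_contra hlt
    push_neg at hlt
    have hepf : ¬ pk A e f := by
      rintro (⟨h1, _⟩ | ⟨h1, _, _⟩ | ⟨_, _, h3⟩)
      · exact heA h1
      · exact heA h1
      · exact absurd h3 (not_lt.mpr hlt.le)
    have hsub2 : canon G A ∩ predE A f ⊆ (canon G A).erase e := by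
      intro x hx
      obtain ⟨hx1, hx2⟩ := Finset.mem_inter.mp hx
      refine Finset.mem_erase.mpr ⟨fun hxe => ?_, hx1⟩
      exact hepf (hxe ▸ (Finset.mem_filter.mp hx2).2)
    have hconnRe : G.Connects ((canon G A).erase e) p q := hconn'.mono hsub2
    rcases connects_insert_elim hp huniv (fun x hx => Finset.mem_insert.mp hx) with h1 | ⟨h1, h2⟩ | ⟨h1, h2⟩
    · exact hne h1
    · exact hne ((h1.trans hconnRe).trans h2)
    · exact hne ((h1.trans hconnRe.symm).trans h2)

/-- Edges of `A` outside the canonical tree are externally active. -/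
lemma canon_ext_active {e : E} (heT : e ∉ canon G A) (heA : e ∈ A) :
    G.ExtActive (canon G A) e := by
  have hEC : G.EndsConnected (predE A e) e := by
    by_contra hc; exact heT (mem_canon.mpr hc)
  obtain ⟨u, v, hu, hconn⟩ := hEC
  have hconn' : G.Connects (canon G A ∩ predE A e) u v := canon_pred_conn G A e hconn
  refine ⟨heT, ⟨u, v, hu, hconn'.mono Finset.inter_subset_left⟩, ?_⟩
  intro f hf
  rcases mem_cycleEdges.mp hf with rfl | ⟨hfT, hnc⟩
  · exact le_rfl
  by_cases hpk : pk A f e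
  · rcases hpk with ⟨_, h2⟩ | ⟨_, _, h3⟩ | ⟨_, h2, _⟩
    · exact absurd heA h2
    · exact h3.le
    · exact absurd heA h2
  · exfalso
    have hsub2 : canon G A ∩ predE A e ⊆ (canon G A).erase f := by
      intro x hx
      obtain ⟨hx1, hx2⟩ := Finset.mem_inter.mp hx
      refine Finset.mem_erase.mpr ⟨fun hxf => ?_, hx1⟩
      exact hpk (hxf ▸ (Finset.mem_filter.mp hx2).2)
    exact hnc ⟨u, v, hu, hconn'.mono hsub2⟩

end VWGraph
namespace VWGraph

set_option linter.unusedSectionVars false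
set_option linter.unusedVariables false

variable {V E : Type} [Fintype V] [Fintype E] [LinearOrder E] {G : VWGraph V E}
  {A B T : Finset E} {u v w p q : V}

lemma exchange_step {T₁ T₂ : Finset E} (h1 : G.IsSpanningTree T₁) (h2 : G.IsSpanningTree T₂)
    (hi1 : ∀ e ∈ T₁, e ∉ A → G.IntActive T₁ e)
    (he2 : ∀ e ∈ A, e ∉ T₂ → G.ExtActive T₂ e)
    {x : E} (hx1 : x ∈ T₁) (hx2 : x ∉ T₂) :
    ∃ y, y ∈ T₂ ∧ y ∉ T₁ ∧ x < y := by
  have h1' := isSpanningTree_iff.mp h1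
  have h2' := isSpanningTree_iff.mp h2
  by_cases hxA : x ∈ A
  · -- x is externally active w.r.t. T₂; its cycle cannot lie inside the forest T₁
    obtain ⟨-, hEC, hmin⟩ := he2 x hxA hx2
    obtain ⟨u, v, hu, hc⟩ := hEC
    by_cases hsub : (T₂.filter fun f => ¬ G.Connects (T₂.erase f) u v) ⊆ T₁
    · exfalso
      have hpath := connects_filter_bridges h2'.1 hc
      have hsub2 : (T₂.filter fun f => ¬ G.Connects (T₂.erase f) u v) ⊆ T₁.erase x := by
        intro g hg
        refine Finset.mem_erase.mpr ⟨fun hgx => hx2 ?_, hsub hg⟩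
        exact hgx ▸ (Finset.mem_filter.mp hg).1
      exact h1'.1 x hx1 ⟨u, v, hu, hpath.mono hsub2⟩
    · obtain ⟨y, hy, hyT1⟩ := Finset.not_subset.mp hsub
      obtain ⟨hyT2, hync⟩ := Finset.mem_filter.mp hy
      have hyc : y ∈ G.cycleEdges T₂ x := mem_cycleEdges.mpr
        (Or.inr ⟨hyT2, fun hEC' => hync ((endsConnected_iff hu).mp hEC')⟩)
      exact ⟨y, hyT2, hyT1,
        lt_of_le_of_ne (hmin y hyc) (fun hh => hx2 (hh ▸ hyT2))⟩
  · -- x is internally active w.r.t. T₁; exchange with a crossing edge of T₂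
    obtain ⟨-, hmin⟩ := hi1 x hx1 hxA
    obtain ⟨u, v, hu⟩ := sym2_exists (G.ends x)
    have hnc : ¬ G.Connects (T₁.erase x) u v := fun hh => h1'.1 x hx1 ⟨u, v, hu, hh⟩
    have hc2 : G.Connects T₂ u v := (h2'.2 u v).mpr (connects_of_adj (Finset.mem_univ x) hu)
    obtain ⟨f, hfT2, hfnc⟩ := exists_crossing hc2
      (fun hh => hnc ((endsConnected_iff hu).mp ((endsConnected_iff hu).mpr hh)))
    have hfT1 : f ∉ T₁ := by
      intro hf
      have hfx : f ≠ x := fun hh => hx2 (hh ▸ hfT2)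
      obtain ⟨p, q, hp⟩ := sym2_exists (G.ends f)
      exact hfnc ⟨p, q, hp, connects_of_adj (Finset.mem_erase.mpr ⟨hfx, hf⟩) hp⟩
    have hce : G.EndsConnected T₁ f := by
      obtain ⟨p, q, hp⟩ := sym2_exists (G.ends f)
      exact ⟨p, q, hp, (h1'.2 p q).mpr (connects_of_adj (Finset.mem_univ f) hp)⟩
    have hst := spanningTree_exchange h1 hfT1 hx1 hfnc hce
    exact ⟨f, hfT2, hfT1, lt_of_le_of_ne (hmin f hst) (fun hh => hfT1 (hh ▸ hx1))⟩

lemma tree_unique {T₁ T₂ : Finset E} (h1 : G.IsSpanningTree T₁) (h2 : G.IsSpanningTree T₂)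
    (hi1 : ∀ e ∈ T₁, e ∉ A → G.IntActive T₁ e)
    (he1 : ∀ e ∈ A, e ∉ T₁ → G.ExtActive T₁ e)
    (hi2 : ∀ e ∈ T₂, e ∉ A → G.IntActive T₂ e)
    (he2 : ∀ e ∈ A, e ∉ T₂ → G.ExtActive T₂ e) : T₁ = T₂ := by
  by_contra hne
  have hD : ((T₁ \ T₂) ∪ (T₂ \ T₁)).Nonempty := by
    rw [Finset.nonempty_iff_ne_empty]
    intro hemp
    rw [Finset.union_eq_empty] at hemp
    exact hne (Finset.Subset.antisymm
      (Finset.sdiff_eq_empty_iff_subset.mp hemp.1)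
      (Finset.sdiff_eq_empty_iff_subset.mp hemp.2))
  set D := (T₁ \ T₂) ∪ (T₂ \ T₁) with hDdef
  have hx := Finset.max'_mem D hD
  rcases Finset.mem_union.mp hx with hx' | hx'
  · obtain ⟨hm1, hm2⟩ := Finset.mem_sdiff.mp hx'
    obtain ⟨y, hy2, hy1, hxy⟩ := exchange_step (A := A) h1 h2 hi1 he2 hm1 hm2
    have hyD : y ∈ D := Finset.mem_union_right _ (Finset.mem_sdiff.mpr ⟨hy2, hy1⟩)
    exact absurd (Finset.le_max' D y hyD) (not_le.mpr hxy)
  · obtain ⟨hm1, hm2⟩ := Finset.mem_sdiff.mp hx'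
    obtain ⟨y, hy2, hy1, hxy⟩ := exchange_step (A := A) h2 h1 hi2 he1 hm1 hm2
    have hyD : y ∈ D := Finset.mem_union_left _ (Finset.mem_sdiff.mpr ⟨hy2, hy1⟩)
    exact absurd (Finset.le_max' D y hyD) (not_le.mpr hxy)

/-- Characterisation of the fibres of the canonical-tree map. -/
lemma canon_eq_iff {T : Finset E} :
    canon G A = T ↔ (G.IsSpanningTree T ∧ (∀ e ∈ T, e ∉ A → G.IntActive T e) ∧
      (∀ e ∈ A, e ∉ T → G.ExtActive T e)) := by
  constructor
  · rintro rfl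
    exact ⟨canon_isSpanningTree G A, fun e he hA => canon_int_active he hA,
      fun e heA heT => canon_ext_active heT heA⟩
  · rintro ⟨hT, hi, he⟩
    exact tree_unique (canon_isSpanningTree G A) hT
      (fun e he' hA => canon_int_active he' hA)
      (fun e hA he' => canon_ext_active he' hA) hi he

end VWGraph
namespace VWGraph

set_option linter.unusedSectionVars false
set_option linter.unusedVariables false

variable {V E : Type} [Fintype V] [Fintype E] [LinearOrder E] {G : VWGraph V E}
  {A B T : Finset E} {u v w p q : V}

/-- An edge of the fundamental cycle of an externally active edge is not
internally active. -/
lemma extActive_cycle_avoids_intActive (hT : G.IsSpanningTree T) {e f : E}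
    (he : G.ExtActive T e) (hf : f ∈ T) (hnc : ¬ G.EndsConnected (T.erase f) e) :
    ¬ G.IntActive T f := by
  intro hfi
  have hst := spanningTree_exchange hT he.1 hf hnc he.2.1
  have h1 : f ≤ e := hfi.2 e hst
  have h2 : e ≤ f := he.2.2 f (mem_cycleEdges.mpr (Or.inr ⟨hf, hnc⟩))
  exact he.1 (le_antisymm h2 h1 ▸ hf)

/-- The ends of an externally active edge stay connected after removing any set
of internally active edges from the tree. -/
lemma extActive_ends_connected_sdiff (hT : G.IsSpanningTree T) {e : E}
    (he : G.ExtActive T e) {S : Finset E} (hSI : S ⊆ G.intActives T) :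
    G.EndsConnected (T \ S) e := by
  obtain ⟨u, v, hu, hc⟩ := he.2.1
  have hpath := connects_filter_bridges (isSpanningTree_iff.mp hT).1 hc
  refine ⟨u, v, hu, hpath.mono ?_⟩
  intro g hg
  obtain ⟨hgT, hgnc⟩ := Finset.mem_filter.mp hg
  refine Finset.mem_sdiff.mpr ⟨hgT, fun hgS => ?_⟩
  have hact : G.IntActive T g := (Finset.mem_filter.mp (hSI hgS)).2
  exact extActive_cycle_avoids_intActive hT he hgT
    (fun hEC => hgnc ((endsConnected_iff hu).mp hEC)) hact

/-- Adding externally active edges does not change connectivity. -/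
lemma connects_interval (hT : G.IsSpanningTree T) {S₁ S₂ : Finset E}
    (hSI : S₁ ⊆ G.intActives T) (hSE : ∀ e ∈ S₂, G.ExtActive T e) (u v : V) :
    G.Connects ((T \ S₁) ∪ S₂) u v ↔ G.Connects (T \ S₁) u v := by
  constructor
  · intro h
    refine h.reduce fun e he hne => ?_
    rcases Finset.mem_union.mp he with h1 | h1
    · exact absurd h1 hne
    · exact extActive_ends_connected_sdiff hT (hSE e h1) hSI
  · exact fun h => h.mono Finset.subset_union_left

end VWGraph

namespace VWGraph

set_option linter.unusedSectionVars false

/-- Components and component weights are preserved along a weight-compatible,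
connectivity-compatible surjection. -/
lemma prod_X_comp_eq {V₁ E₁ V₂ E₂ S R : Type} [Fintype V₁] [Fintype E₁] [Fintype V₂]
    [Fintype E₂] [AddCommMonoid S] [CommRing R]
    (G₁ : VWGraph V₁ E₁) (G₂ : VWGraph V₂ E₂) (A₁ : Finset E₁) (A₂ : Finset E₂)
    (ω₁ : V₁ → S) (ω₂ : V₂ → S) (π : V₁ → V₂) (hsurj : Function.Surjective π)
    (hconn : ∀ u v, G₁.Connects A₁ u v ↔ G₂.Connects A₂ (π u) (π v))
    (hw : ∀ y, ω₂ y = ∑ x ∈ Finset.univ.filter (fun x => π x = y), ω₁ x) :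
    ∏ c : G₁.Comp A₁, (MvPolynomial.X (G₁.compWeight A₁ ω₁ c) : MvPolynomial S R) =
      ∏ c : G₂.Comp A₂, MvPolynomial.X (G₂.compWeight A₂ ω₂ c) := by
  have hsound : ∀ a b : V₁, (G₁.compSetoid A₁).r a b →
      Quotient.mk (G₂.compSetoid A₂) (π a) = Quotient.mk (G₂.compSetoid A₂) (π b) :=
    fun a b hab => Quotient.sound ((hconn a b).mp hab)
  set F : G₁.Comp A₁ → G₂.Comp A₂ :=
    Quotient.lift (fun x => Quotient.mk (G₂.compSetoid A₂) (π x)) hsound with hF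
  have hFmk : ∀ x : V₁, F (Quotient.mk (G₁.compSetoid A₁) x) =
      Quotient.mk (G₂.compSetoid A₂) (π x) := fun x => rfl
  have hbij : Function.Bijective F := by
    constructor
    · intro c₁ c₁' h
      induction c₁ using Quotient.ind with | _ a =>
      induction c₁' using Quotient.ind with | _ b =>
      rw [hFmk, hFmk] at h
      exact Quotient.sound ((hconn a b).mpr (Quotient.exact h))
    · intro c₂
      induction c₂ using Quotient.ind with | _ y =>
      obtain ⟨x, rfl⟩ := hsurj y
      exact ⟨Quotient.mk (G₁.compSetoid A₁) x, rfl⟩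
  have hweight : ∀ c₁ : G₁.Comp A₁,
      G₁.compWeight A₁ ω₁ c₁ = G₂.compWeight A₂ ω₂ (F c₁) := by
    intro c₁
    have hvertseq : Finset.univ.filter
        (fun x : V₁ => Quotient.mk (G₂.compSetoid A₂) (π x) = F c₁) =
        G₁.compVerts A₁ c₁ := by
      ext x
      simp only [Finset.mem_filter, Finset.mem_univ, true_and, compVerts]
      constructor
      · intro h
        induction c₁ using Quotient.ind with | _ z =>
        rw [hFmk] at h
        exact Quotient.sound ((hconn x z).mpr (Quotient.exact h))
      · intro h
        rw [← h, hFmk]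
    have hmaps : ∀ x ∈ Finset.univ.filter
        (fun x : V₁ => Quotient.mk (G₂.compSetoid A₂) (π x) = F c₁),
        π x ∈ G₂.compVerts A₂ (F c₁) := by
      intro x hx
      simp only [Finset.mem_filter, Finset.mem_univ, true_and] at hx
      simp only [compVerts, Finset.mem_filter, Finset.mem_univ, true_and]
      exact hx
    have hfib := Finset.sum_fiberwise_of_maps_to hmaps ω₁
    unfold compWeight
    rw [← hvertseq, ← hfib]
    refine Finset.sum_congr rfl fun y hy => ?_
    rw [hw y]
    refine Finset.sum_congr ?_ fun x hx => rfl
    ext x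
    simp only [Finset.mem_filter, Finset.mem_univ, true_and]
    constructor
    · exact fun hh => hh.2
    · intro hh
      refine ⟨?_, hh⟩
      rw [hh]
      simpa [compVerts] using hy
  exact Fintype.prod_bijective F hbij _ _
    (fun c₁ => congrArg MvPolynomial.X (hweight c₁))

end VWGraph
namespace VWGraph

set_option linter.unusedSectionVars false
set_option linter.unusedVariables false

variable {V E : Type} [Fintype V] [Fintype E] [LinearOrder E] {G : VWGraph V E}
  {A B T : Finset E} {u v w p q : V}

/-- Connectivity in a quotient graph corresponds to connectivity in `G` with all
the contracted edges added. -/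
lemma connects_map_quotient {B : Finset E} {κ : Type} (ι : κ → E)
    (H : VWGraph (G.Comp B) κ)
    (hH : ∀ f, H.ends f = (G.ends (ι f)).map (Quotient.mk (G.compSetoid B)))
    (A' : Finset κ) (C : Finset E) (hC : ∀ e, e ∈ C ↔ ∃ f ∈ A', ι f = e) (u v : V) :
    G.Connects (B ∪ C) u v ↔
      H.Connects A' (Quotient.mk (G.compSetoid B) u) (Quotient.mk (G.compSetoid B) v) := by
  constructor
  · intro h
    induction h with
    | rel x y hxy =>
      obtain ⟨e, he, hends⟩ := hxy
      rcases Finset.mem_union.mp he with heB | heC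
      · have : Quotient.mk (G.compSetoid B) x = Quotient.mk (G.compSetoid B) y :=
          Quotient.sound (connects_of_adj heB hends)
        rw [this]
        exact connects_refl H A' _
      · obtain ⟨f, hf, rfl⟩ := (hC e).mp heC
        refine Relation.EqvGen.rel _ _ ⟨f, hf, ?_⟩
        rw [hH f, hends]
        exact Sym2.map_pair_eq _ _ _
    | refl x => exact connects_refl H A' _
    | symm x y _ ih => exact ih.symm
    | trans x y z _ _ ih ih' => exact ih.trans ih'
  · intro h
    have key : ∀ c c', H.Connects A' c c' → ∀ x y : V,
        Quotient.mk (G.compSetoid B) x = c → Quotient.mk (G.compSetoid B) y = c' →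
        G.Connects (B ∪ C) x y := by
      intro c c' h
      induction h with
      | rel a b hab =>
        rintro x y rfl rfl
        obtain ⟨f, hf, hends⟩ := hab
        obtain ⟨s, t, hst⟩ := sym2_exists (G.ends (ι f))
        rw [hH f, hst, Sym2.map_pair_eq] at hends
        have hCf : ι f ∈ C := (hC (ι f)).mpr ⟨f, hf, rfl⟩
        have hadj : G.Connects (B ∪ C) s t :=
          connects_of_adj (Finset.mem_union_right B hCf) hst
        replace hends := Sym2.eq_iff.mp hends
        rcases hends with ⟨h1, h2⟩ | ⟨h1, h2⟩
        · have hx : G.Connects B x s := Quotient.exact h1.symm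
          have hy : G.Connects B t y := Quotient.exact h2
          exact ((hx.mono Finset.subset_union_left).trans hadj).trans
            (hy.mono Finset.subset_union_left)
        · have hx : G.Connects B x t := Quotient.exact h2.symm
          have hy : G.Connects B s y := Quotient.exact h1
          exact ((hx.mono Finset.subset_union_left).trans hadj.symm).trans
            (hy.mono Finset.subset_union_left)
      | refl a =>
        rintro x y rfl hy
        have hq : G.Connects B y x := Quotient.exact hy
        exact hq.symm.mono Finset.subset_union_left
      | symm a b _ ih =>
        rintro x y rfl rfl
        exact (ih y x rfl rfl).symm
      | trans a b c _ _ ih ih' =>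
        rintro x y rfl rfl
        obtain ⟨z, hz⟩ := Quotient.exists_rep b
        exact (ih x z rfl hz).trans (ih' z y hz rfl)
    exact key _ _ h u v rfl rfl

end VWGraph
namespace VWGraph

set_option linter.unusedSectionVars false
set_option linter.unusedVariables false

variable {V E S R : Type} [Fintype V] [Fintype E] [LinearOrder E]
  [AddCommMonoid S] [CommRing R] {G : VWGraph V E} {A B T : Finset E} {u v w p q : V}

lemma mem_intActives_iff {e : E} : e ∈ G.intActives T ↔ e ∈ T ∧ G.IntActive T e := by
  simp [intActives]

lemma mem_intInactives_iff {e : E} :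
    e ∈ G.intInactives T ↔ e ∈ T ∧ ¬ G.IntActive T e := by
  simp [intInactives]

lemma mem_extActives_iff {e : E} : e ∈ G.extActives T ↔ G.ExtActive T e := by
  simp [extActives]

lemma vpoly_contract_aux (ω : V → S) (γ : E → R) (T D : Finset E)
    (H : VWGraph (G.Comp (G.intInactives T)) ↥D)
    (hD : ∀ e : E, e ∈ D ↔ e ∈ T ∧ e ∉ G.intInactives T)
    (hH : ∀ f : ↥D, H.ends f =
      (G.ends f.1).map (Quotient.mk (G.compSetoid (G.intInactives T)))) :
    H.Vpoly (G.compWeight (G.intInactives T) ω) (fun f => γ f.1) =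
    ∑ Bb ∈ (G.intActives T).powerset,
      (∏ c : G.Comp (G.intInactives T ∪ Bb),
        MvPolynomial.X (G.compWeight (G.intInactives T ∪ Bb) ω c)) *
      MvPolynomial.C (∏ e ∈ Bb, γ e) := by
  have hmem : ∀ f : ↥D, f.1 ∈ G.intActives T := by
    intro f
    obtain ⟨h1, h2⟩ := (hD f.1).mp f.2
    refine mem_intActives_iff.mpr ⟨h1, ?_⟩
    by_contra hna
    exact h2 (mem_intInactives_iff.mpr ⟨h1, hna⟩)
  have hmem' : ∀ e ∈ G.intActives T, e ∈ D := by
    intro e he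
    obtain ⟨h1, h2⟩ := mem_intActives_iff.mp he
    exact (hD e).mpr ⟨h1, fun hc => (mem_intInactives_iff.mp hc).2 h2⟩
  unfold Vpoly
  refine Finset.sum_nbij' (fun A' => A'.image Subtype.val)
    (fun Bb => Finset.univ.filter (fun f : ↥D => f.1 ∈ Bb))
    ?_ ?_ ?_ ?_ ?_
  · intro A' _
    refine Finset.mem_powerset.mpr fun e he => ?_
    obtain ⟨f, _, rfl⟩ := Finset.mem_image.mp he
    exact hmem f
  · intro Bb _
    exact Finset.mem_univ _
  · intro A' _
    ext f
    simp only [Finset.mem_filter, Finset.mem_univ, true_and, Finset.mem_image]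
    constructor
    · rintro ⟨g, hg, hge⟩
      rwa [← Subtype.ext hge]
    · exact fun h => ⟨f, h, rfl⟩
  · intro Bb hBb
    ext e
    simp only [Finset.mem_image, Finset.mem_filter, Finset.mem_univ, true_and]
    constructor
    · rintro ⟨f, hf, rfl⟩
      exact hf
    · intro he
      exact ⟨⟨e, hmem' e (Finset.mem_powerset.mp hBb he)⟩, he, rfl⟩
  · intro A' _
    have hCγ : ∏ f ∈ A', γ f.1 = ∏ e ∈ A'.image Subtype.val, γ e :=
      (Finset.prod_image fun x _ y _ h => Subtype.ext h).symm
    have hX := prod_X_comp_eq (R := R) G H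
      (G.intInactives T ∪ A'.image Subtype.val) A' ω
      (G.compWeight (G.intInactives T) ω)
      (Quotient.mk (G.compSetoid (G.intInactives T)))
      (fun c => Quotient.exists_rep c)
      (fun u v => connects_map_quotient Subtype.val H hH A'
        (A'.image Subtype.val) (fun e => Finset.mem_image) u v)
      (fun y => by
        unfold compWeight compVerts
        refine Finset.sum_congr ?_ fun _ _ => rfl
        ext x
        simp only [Finset.mem_filter, Finset.mem_univ, true_and]
        exact Iff.rfl)
    rw [hCγ, ← hX]

lemma vpoly_contract (ω : V → S) (γ : E → R) (T : Finset E) :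
    (G.contractIn T (G.intInactives T)).Vpoly (G.compWeight (G.intInactives T) ω)
      (fun f => γ f.1) =
    ∑ Bb ∈ (G.intActives T).powerset,
      (∏ c : G.Comp (G.intInactives T ∪ Bb),
        MvPolynomial.X (G.compWeight (G.intInactives T ∪ Bb) ω c)) *
      MvPolynomial.C (∏ e ∈ Bb, γ e) :=
  vpoly_contract_aux ω γ T _ (G.contractIn T (G.intInactives T))
    (fun e => @Finset.mem_sdiff E (fun a b => Classical.propDecidable (a = b)) _ _ _) (fun f => rfl)

end VWGraph
namespace VWGraph

set_option linter.unusedSectionVars false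
set_option linter.unusedVariables false
set_option maxHeartbeats 1000000

variable {V E S R : Type} [Fintype V] [Fintype E] [LinearOrder E]
  [AddCommMonoid S] [CommRing R] {G : VWGraph V E} {T : Finset E}

lemma tree_sdiff_eq {S₁ : Finset E} (hS₁ : S₁ ⊆ G.intActives T) :
    T \ S₁ = G.intInactives T ∪ (G.intActives T \ S₁) := by
  ext e
  simp only [Finset.mem_sdiff, Finset.mem_union, mem_intInactives_iff, mem_intActives_iff]
  constructor
  · rintro ⟨heT, heS⟩
    by_cases hact : G.IntActive T e
    · exact Or.inr ⟨⟨heT, hact⟩, heS⟩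
    · exact Or.inl ⟨heT, hact⟩
  · rintro (⟨heT, hact⟩ | ⟨⟨heT, hact⟩, heS⟩)
    · exact ⟨heT, fun hc => hact (mem_intActives_iff.mp (hS₁ hc)).2⟩
    · exact ⟨heT, heS⟩

lemma tree_fiber_sum (hT : G.IsSpanningTree T) (ω : V → S) (γ : E → R) :
    ∑ A ∈ Finset.univ.filter (fun A => canon G A = T),
      (∏ c : G.Comp A, MvPolynomial.X (G.compWeight A ω c)) *
        MvPolynomial.C (∏ e ∈ A, γ e) =
    (∏ e ∈ G.intInactives T, MvPolynomial.C (γ e)) *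
      (∏ e ∈ G.extActives T, (MvPolynomial.C (γ e) + 1)) *
      (G.contractIn T (G.intInactives T)).Vpoly
        (G.compWeight (G.intInactives T) ω) (fun f => γ f.1) := by
  have hstep1 :
      ∑ A ∈ Finset.univ.filter (fun A => canon G A = T),
        (∏ c : G.Comp A, MvPolynomial.X (G.compWeight A ω c)) *
          MvPolynomial.C (∏ e ∈ A, γ e) =
      ∑ p ∈ (G.intActives T).powerset ×ˢ (G.extActives T).powerset,
        (∏ c : G.Comp ((T \ p.1) ∪ p.2),
          MvPolynomial.X (G.compWeight ((T \ p.1) ∪ p.2) ω c)) *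
          MvPolynomial.C (∏ e ∈ (T \ p.1) ∪ p.2, γ e) := by
    refine (Finset.sum_nbij'
      (f := fun p : Finset E × Finset E =>
        (∏ c : G.Comp ((T \ p.1) ∪ p.2),
          MvPolynomial.X (G.compWeight ((T \ p.1) ∪ p.2) ω c)) *
          MvPolynomial.C (∏ e ∈ (T \ p.1) ∪ p.2, γ e))
      (g := fun A : Finset E =>
        (∏ c : G.Comp A, MvPolynomial.X (G.compWeight A ω c)) *
          MvPolynomial.C (∏ e ∈ A, γ e))
      (fun p => (T \ p.1) ∪ p.2) (fun A => (T \ A, A \ T))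
      ?_ ?_ ?_ ?_ (fun p _ => rfl)).symm
    · -- maps product into the fibre
      intro p hp
      obtain ⟨h1, h2⟩ := Finset.mem_product.mp hp
      rw [Finset.mem_powerset] at h1 h2
      refine Finset.mem_filter.mpr ⟨Finset.mem_univ _, canon_eq_iff.mpr ⟨hT, ?_, ?_⟩⟩
      · intro e heT heA
        simp only [Finset.mem_union, Finset.mem_sdiff, not_or, not_and, not_not] at heA
        exact (mem_intActives_iff.mp (h1 (heA.1 heT))).2
      · intro e heA heT
        simp only [Finset.mem_union, Finset.mem_sdiff] at heA
        rcases heA with ⟨h3, _⟩ | h3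
        · exact absurd h3 heT
        · exact mem_extActives_iff.mp (h2 h3)
    · -- maps fibre into the product
      intro A hA
      obtain ⟨hTT, hint, hext⟩ := canon_eq_iff.mp (Finset.mem_filter.mp hA).2
      refine Finset.mem_product.mpr ⟨Finset.mem_powerset.mpr ?_, Finset.mem_powerset.mpr ?_⟩
      · intro e he
        obtain ⟨h1, h2⟩ := Finset.mem_sdiff.mp he
        exact mem_intActives_iff.mpr ⟨h1, hint e h1 h2⟩
      · intro e he
        obtain ⟨h1, h2⟩ := Finset.mem_sdiff.mp he
        exact mem_extActives_iff.mpr (hext e h1 h2)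
    · -- left inverse
      intro p hp
      obtain ⟨h1, h2⟩ := Finset.mem_product.mp hp
      rw [Finset.mem_powerset] at h1 h2
      have hS₁T : ∀ e ∈ p.1, e ∈ T := fun e he => (mem_intActives_iff.mp (h1 he)).1
      have hS₂T : ∀ e ∈ p.2, e ∉ T := fun e he => (mem_extActives_iff.mp (h2 he)).1
      have e1 : T \ ((T \ p.1) ∪ p.2) = p.1 := by
        ext e
        simp only [Finset.mem_sdiff, Finset.mem_union, not_or, not_and, not_not]
        constructor
        · rintro ⟨heT, hno, _⟩
          exact hno heT
        · intro he
          exact ⟨hS₁T e he, fun _ => he, fun hc => hS₂T e hc (hS₁T e he)⟩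
      have e2 : ((T \ p.1) ∪ p.2) \ T = p.2 := by
        ext e
        simp only [Finset.mem_sdiff, Finset.mem_union]
        constructor
        · rintro ⟨⟨h3, _⟩ | h3, h4⟩
          · exact absurd h3 h4
          · exact h3
        · intro he
          exact ⟨Or.inr he, hS₂T e he⟩
      rw [Prod.ext_iff]
      exact ⟨e1, e2⟩
    · -- right inverse
      intro A hA
      ext e
      simp only [Finset.mem_union, Finset.mem_sdiff, not_and, not_not]
      constructor
      · rintro (⟨h1, h2⟩ | ⟨h1, h2⟩)
        · exact h2 h1
        · exact h1
      · intro he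
        by_cases heT : e ∈ T
        · exact Or.inl ⟨heT, fun _ => he⟩
        · exact Or.inr ⟨he, heT⟩
  rw [hstep1]
  have hstep2 :
      ∑ p ∈ (G.intActives T).powerset ×ˢ (G.extActives T).powerset,
        (∏ c : G.Comp ((T \ p.1) ∪ p.2),
          MvPolynomial.X (G.compWeight ((T \ p.1) ∪ p.2) ω c)) *
          MvPolynomial.C (∏ e ∈ (T \ p.1) ∪ p.2, γ e) =
      ∑ p ∈ (G.intActives T).powerset ×ˢ (G.extActives T).powerset,
        ((∏ c : G.Comp (T \ p.1), MvPolynomial.X (G.compWeight (T \ p.1) ω c)) *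
          MvPolynomial.C (∏ e ∈ T \ p.1, γ e)) * MvPolynomial.C (∏ e ∈ p.2, γ e) := by
    refine Finset.sum_congr rfl fun p hp => ?_
    obtain ⟨h1, h2⟩ := Finset.mem_product.mp hp
    rw [Finset.mem_powerset] at h1 h2
    have hdisj : Disjoint (T \ p.1) p.2 := by
      rw [Finset.disjoint_left]
      intro e he hc
      exact (mem_extActives_iff.mp (h2 hc)).1 (Finset.mem_sdiff.mp he).1
    have hm : (∏ c : G.Comp ((T \ p.1) ∪ p.2),
        MvPolynomial.X (G.compWeight ((T \ p.1) ∪ p.2) ω c) : MvPolynomial S R) =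
        ∏ c : G.Comp (T \ p.1), MvPolynomial.X (G.compWeight (T \ p.1) ω c) := by
      refine prod_X_comp_eq G G ((T \ p.1) ∪ p.2) (T \ p.1) ω ω (fun x => x)
        Function.surjective_id (fun u v => connects_interval hT h1
          (fun e he => mem_extActives_iff.mp (h2 he)) u v) (fun y => ?_)
      have : Finset.univ.filter (fun x : V => x = y) = {y} := by
        ext x
        simp
      simp only [this, Finset.sum_singleton]
    rw [Finset.prod_union hdisj, map_mul, hm]
    ring
  rw [hstep2]
  rw [Finset.sum_product]
  have hinner : ∀ S₁ ∈ (G.intActives T).powerset,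
      ∑ S₂ ∈ (G.extActives T).powerset,
        ((∏ c : G.Comp (T \ S₁), MvPolynomial.X (G.compWeight (T \ S₁) ω c)) *
          MvPolynomial.C (∏ e ∈ T \ S₁, γ e)) * MvPolynomial.C (∏ e ∈ S₂, γ e) =
      ((∏ c : G.Comp (T \ S₁), MvPolynomial.X (G.compWeight (T \ S₁) ω c)) *
          MvPolynomial.C (∏ e ∈ T \ S₁, γ e)) *
        ∑ S₂ ∈ (G.extActives T).powerset, MvPolynomial.C (∏ e ∈ S₂, γ e) := by
    intro S₁ _
    rw [Finset.mul_sum]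
  rw [Finset.sum_congr rfl hinner, ← Finset.sum_mul]
  have hext_sum : ∑ S₂ ∈ (G.extActives T).powerset,
      (MvPolynomial.C (∏ e ∈ S₂, γ e) : MvPolynomial S R) =
      ∏ e ∈ G.extActives T, (MvPolynomial.C (γ e) + 1) := by
    rw [Finset.prod_add]
    refine Finset.sum_congr rfl fun t _ => ?_
    rw [Finset.prod_const_one, mul_one, map_prod]
  rw [hext_sum]
  have hcompl : ∑ S₁ ∈ (G.intActives T).powerset,
      ((∏ c : G.Comp (T \ S₁), MvPolynomial.X (G.compWeight (T \ S₁) ω c)) *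
        MvPolynomial.C (∏ e ∈ T \ S₁, γ e) : MvPolynomial S R) =
      (∏ e ∈ G.intInactives T, MvPolynomial.C (γ e)) *
        ∑ Bb ∈ (G.intActives T).powerset,
          (∏ c : G.Comp (G.intInactives T ∪ Bb),
            MvPolynomial.X (G.compWeight (G.intInactives T ∪ Bb) ω c)) *
            MvPolynomial.C (∏ e ∈ Bb, γ e) := by
    rw [Finset.mul_sum]
    refine Finset.sum_nbij'
      (f := fun S₁ : Finset E =>
        (∏ c : G.Comp (T \ S₁), MvPolynomial.X (G.compWeight (T \ S₁) ω c)) *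
          MvPolynomial.C (∏ e ∈ T \ S₁, γ e))
      (g := fun Bb : Finset E =>
        (∏ e ∈ G.intInactives T, MvPolynomial.C (γ e)) *
          ((∏ c : G.Comp (G.intInactives T ∪ Bb),
            MvPolynomial.X (G.compWeight (G.intInactives T ∪ Bb) ω c)) *
            MvPolynomial.C (∏ e ∈ Bb, γ e)))
      (fun S₁ => G.intActives T \ S₁)
      (fun Bb => G.intActives T \ Bb) ?_ ?_ ?_ ?_ ?_
    · intro S₁ _
      exact Finset.mem_powerset.mpr Finset.sdiff_subset
    · intro Bb _
      exact Finset.mem_powerset.mpr Finset.sdiff_subset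
    · intro S₁ hS₁
      exact Finset.sdiff_sdiff_eq_self (Finset.mem_powerset.mp hS₁)
    · intro Bb hBb
      exact Finset.sdiff_sdiff_eq_self (Finset.mem_powerset.mp hBb)
    · intro S₁ hS₁
      have hsub := Finset.mem_powerset.mp hS₁
      have hdisj2 : Disjoint (G.intInactives T) (G.intActives T \ S₁) := by
        rw [Finset.disjoint_left]
        intro e he hc
        exact (mem_intInactives_iff.mp he).2
          (mem_intActives_iff.mp (Finset.mem_sdiff.mp hc).1).2
      rw [tree_sdiff_eq hsub, Finset.prod_union hdisj2, map_mul, map_prod]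
      ring
  rw [hcompl, ← vpoly_contract ω γ T]
  ring

/-- Main result, in the `VWGraph` namespace. -/
theorem vpoly_expansion (ω : V → S) (γ : E → R) :
    G.Vpoly ω γ =
      ∑ T ∈ Finset.univ.filter (fun T => G.IsSpanningTree T),
        (∏ e ∈ G.intInactives T, MvPolynomial.C (γ e)) *
        (∏ e ∈ G.extActives T, (MvPolynomial.C (γ e) + 1)) *
        (G.contractIn T (G.intInactives T)).Vpoly
          (G.compWeight (G.intInactives T) ω) (fun f => γ f.1) := by
  have hmaps : ∀ A ∈ (Finset.univ : Finset (Finset E)), canon G A ∈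
      Finset.univ.filter (fun T => G.IsSpanningTree T) :=
    fun A _ => Finset.mem_filter.mpr ⟨Finset.mem_univ _, canon_isSpanningTree G A⟩
  have hfib := Finset.sum_fiberwise_of_maps_to hmaps
    (fun A => (∏ c : G.Comp A, MvPolynomial.X (G.compWeight A ω c)) *
      MvPolynomial.C (∏ e ∈ A, γ e))
  show (∑ A : Finset E, (∏ c : G.Comp A, MvPolynomial.X (G.compWeight A ω c)) *
      MvPolynomial.C (∏ e ∈ A, γ e)) = _
  rw [← hfib]
  refine Finset.sum_congr rfl fun T hT => ?_
  have hT' : G.IsSpanningTree T := (Finset.mem_filter.mp hT).2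
  rw [← tree_fiber_sum hT' ω γ]

end VWGraph

/-- Spanning tree expansion of the V-polynomial:
`V(G) = Σ_{T∈𝒯(G)} (∏_{II} γ_e)(∏_{EA}(γ_e+1)) V(T / II(G,T))`. -/
theorem Vpoly_spanning_tree_expansion {V E S R : Type} [Fintype V] [Fintype E]
    [LinearOrder E] [AddCommMonoid S] [CommRing R] (G : VWGraph V E)
    (ω : V → S) (γ : E → R) :
    G.Vpoly ω γ =
      ∑ T ∈ Finset.univ.filter (fun T => G.IsSpanningTree T),
        (∏ e ∈ G.intInactives T, MvPolynomial.C (γ e)) *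
        (∏ e ∈ G.extActives T, (MvPolynomial.C (γ e) + 1)) *
        (G.contractIn T (G.intInactives T)).Vpoly
          (G.compWeight (G.intInactives T) ω) (fun f => γ f.1) := by
  exact VWGraph.vpoly_expansion ω γ
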